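/- arXiv:gr-qc/0101020 — 2 statements merged into one kernel-verified Lean document; each statement's English description precedes it below -/
import Mathlib

section
/- Let U be a smooth manifold, ζ a smooth vector field on U, and W⁰ an arbitrary smooth one-form on U. For t ∈ ℝ define the one-form W(t) pointwise by W(t)_p = f(a_p, t)·W⁰_p, where a_p = W⁰(ζ)(p) and f(a,t) = (exp(at) − 1)/a for a ≠ 0 and f(0,t) = t. Then each W(t) is a smooth one-form satisfying 1 + W(t)(ζ) = exp(t·W⁰(ζ)) > 0 pointwise (so W(t) ∈ G^ζ), and W(s)·W(t) = W(t+s) for all s, t ∈ ℝ; i.e. t ↦ W(t) is a one-parameter subgroup of (G^ζ, ·). -/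
open Bundle
open scoped Manifold

section

variable {E : Type*} [NormedAddCommGroup E] [NormedSpace ℝ E]
  {H : Type*} [TopologicalSpace H] (I : ModelWithCorners ℝ E H)
  {M : Type*} [TopologicalSpace M] [ChartedSpace H M] [IsManifold I (⊤ : ℕ∞) M]

/-- A vector field is smooth if it is a smooth section of the tangent bundle. -/
def IsSmoothVectorField (ζ : ∀ x : M, TangentSpace I x) : Prop :=
  ContMDiff I I.tangent (⊤ : ℕ∞) (fun x => (⟨x, ζ x⟩ : TangentBundle I M))

/-- A one-form is smooth if it is a smooth section of the bundle of continuous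
linear maps from the tangent bundle to the trivial real line bundle. -/
def IsSmoothOneForm (ω : ∀ x : M, TangentSpace I x →L[ℝ] ℝ) : Prop :=
  ContMDiff I (I.prod 𝓘(ℝ, E →L[ℝ] ℝ)) (⊤ : ℕ∞)
    (fun x => (⟨x, ω x⟩ : TotalSpace (E →L[ℝ] ℝ)
      (fun x ↦ TangentSpace I x →SL[RingHom.id ℝ] Bundle.Trivial M ℝ x)))

/-- The product `W²·W¹ := W² + (1 + W²(ζ))·W¹` of one-forms relative to the vector
field `ζ`. -/
noncomputable def oneFormMul (ζ : ∀ x : M, TangentSpace I x)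
    (W2 W1 : ∀ x : M, TangentSpace I x →L[ℝ] ℝ) :
    ∀ x : M, TangentSpace I x →L[ℝ] ℝ :=
  fun x => W2 x + (1 + W2 x (ζ x)) • W1 x

/-- The coefficient function `f(a, t) = (exp(at) − 1)/a` for `a ≠ 0`, `f(0, t) = t`. -/
noncomputable def ehlersCoeff (a t : ℝ) : ℝ :=
  if a = 0 then t else (Real.exp (a * t) - 1) / a


lemma contDiff_ehlersCoeff_aux (t : ℝ) :
    ContDiff ℝ (⊤ : ℕ∞) (fun a : ℝ => ehlersCoeff a t) := by
  unfold ehlersCoeff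
  have key : ∀ a : ℝ, (if a = 0 then t else (Real.exp (a * t) - 1) / a)
      = dslope (fun b : ℝ => Real.exp (b * t)) 0 a := by
    intro a
    rcases eq_or_ne a 0 with rfl | h
    · have hd : HasDerivAt (fun b : ℝ => Real.exp (b * t)) (Real.exp (0 * t) * (1 * t)) 0 :=
        ((hasDerivAt_id (0:ℝ)).mul_const t).exp
      simp [dslope, hd.deriv]
    · simp [dslope, Function.update_of_ne h, slope_def_field, h]
  rw [funext key]
  rw [contDiff_iff_contDiffAt]
  intro a
  rcases eq_or_ne a 0 with rfl | h
  · have ha : AnalyticAt ℝ (fun b : ℝ => Real.exp (b * t)) 0 :=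
      AnalyticAt.rexp ((analyticAt_id).mul analyticAt_const)
    obtain ⟨p, hp⟩ := ha
    exact (HasFPowerSeriesAt.has_fpower_series_dslope_fslope hp).analyticAt.contDiffAt
  · have hev : ∀ᶠ b in nhds a, dslope (fun b : ℝ => Real.exp (b * t)) 0 b
        = (Real.exp (b * t) - 1) / b := by
      filter_upwards [eventually_ne_nhds h] with b hb
      simp [dslope, Function.update_of_ne hb, slope_def_field, hb]
    refine ContDiffAt.congr_of_eventuallyEq ?_ hev
    exact ContDiffAt.div (by fun_prop) contDiffAt_id h

lemma ehlersCoeff_mul_self_aux (a t : ℝ) : 1 + ehlersCoeff a t * a = Real.exp (t * a) := by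
  rcases eq_or_ne a 0 with rfl | h
  · simp [ehlersCoeff]
  · rw [ehlersCoeff, if_neg h, div_mul_cancel₀ _ h, mul_comm t a]
    ring

lemma ehlersCoeff_add_aux (a s t : ℝ) :
    ehlersCoeff a s + Real.exp (s * a) * ehlersCoeff a t = ehlersCoeff a (t + s) := by
  rcases eq_or_ne a 0 with rfl | h
  · simp [ehlersCoeff]; ring
  · simp only [ehlersCoeff, if_neg h]
    rw [mul_comm s a]
    field_simp
    rw [mul_add, Real.exp_add]
    ring

lemma contMDiff_oneForm_apply_aux {E : Type*} [NormedAddCommGroup E] [NormedSpace ℝ E]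
    {H : Type*} [TopologicalSpace H] (I : ModelWithCorners ℝ E H)
    {M : Type*} [TopologicalSpace M] [ChartedSpace H M] [IsManifold I (⊤ : ℕ∞) M]
    (ζ : ∀ x : M, TangentSpace I x) (hζ : IsSmoothVectorField I ζ)
    (W0 : ∀ x : M, TangentSpace I x →L[ℝ] ℝ) (hW0 : IsSmoothOneForm I W0) :
    ContMDiff I 𝓘(ℝ, ℝ) (⊤ : ℕ∞) (fun x => W0 x (ζ x)) := by
  intro x₀
  have hϕ := (contMDiffAt_hom_bundle _).1 (hW0 x₀) |>.2
  have h2 : ContMDiffAt I (I.prod 𝓘(ℝ, ℝ)) (⊤ : ℕ∞)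
      (fun m => (⟨m, W0 m (ζ m)⟩ : TotalSpace ℝ (Bundle.Trivial M ℝ))) x₀ :=
    ContMDiffAt.clm_apply_of_inCoordinates hϕ (hζ x₀) contMDiffAt_id
  exact ((Bundle.contMDiffAt_totalSpace).1 h2).2

lemma isSmoothOneForm_smul_aux {E : Type*} [NormedAddCommGroup E] [NormedSpace ℝ E]
    {H : Type*} [TopologicalSpace H] (I : ModelWithCorners ℝ E H)
    {M : Type*} [TopologicalSpace M] [ChartedSpace H M] [IsManifold I (⊤ : ℕ∞) M]
    (W0 : ∀ x : M, TangentSpace I x →L[ℝ] ℝ) (c : M → ℝ)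
    (hc : ContMDiff I 𝓘(ℝ, ℝ) (⊤ : ℕ∞) c) (hW0 : IsSmoothOneForm I W0) :
    IsSmoothOneForm I (fun x => c x • W0 x) := by
  intro x₀
  rw [contMDiffAt_hom_bundle]
  refine ⟨contMDiffAt_id, ?_⟩
  have h := (contMDiffAt_hom_bundle _).1 (hW0 x₀) |>.2
  have heq : (fun x => ContinuousLinearMap.inCoordinates E (TangentSpace I) ℝ (Bundle.Trivial M ℝ)
        x₀ x x₀ x (c x • W0 x))
      = fun x => c x • ContinuousLinearMap.inCoordinates E (TangentSpace I) ℝ (Bundle.Trivial M ℝ)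
        x₀ x x₀ x (W0 x) := by
    funext x
    simp [ContinuousLinearMap.inCoordinates, ContinuousLinearMap.comp_smul,
      ContinuousLinearMap.smul_comp]
  exact heq ▸ ((hc x₀).smul h)

/-- **One-parameter subgroups of `(G^ζ, ·)`** (Section 3 of the paper): for a smooth
vector field `ζ` and an arbitrary smooth one-form `W⁰`, the curve
`W(t) = f(W⁰(ζ), t)·W⁰` (with `f(a,t) = (exp(at)−1)/a` for `a ≠ 0`, `f(0,t) = t`)
consists of smooth one-forms satisfying `1 + W(t)(ζ) = exp(t·W⁰(ζ)) > 0` pointwise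
(so `W(t) ∈ G^ζ`), and `W(s)·W(t) = W(t+s)` for all `s, t ∈ ℝ`. -/
theorem ehlers_oneParameter_subgroup (ζ : ∀ x : M, TangentSpace I x)
    (hζ : IsSmoothVectorField I ζ)
    (W0 : ∀ x : M, TangentSpace I x →L[ℝ] ℝ) (hW0 : IsSmoothOneForm I W0) :
    (∀ t : ℝ,
      IsSmoothOneForm I (fun x => ehlersCoeff (W0 x (ζ x)) t • W0 x)
      ∧ (∀ x : M,
          1 + (ehlersCoeff (W0 x (ζ x)) t • W0 x) (ζ x) = Real.exp (t * W0 x (ζ x))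
          ∧ 0 < 1 + (ehlersCoeff (W0 x (ζ x)) t • W0 x) (ζ x)))
    ∧ ∀ s t : ℝ,
        oneFormMul I ζ (fun x => ehlersCoeff (W0 x (ζ x)) s • W0 x)
            (fun x => ehlersCoeff (W0 x (ζ x)) t • W0 x)
          = fun x => ehlersCoeff (W0 x (ζ x)) (t + s) • W0 x := by
  have happ := contMDiff_oneForm_apply_aux I ζ hζ W0 hW0
  refine ⟨fun t => ⟨?_, fun x => ?_⟩, fun s t => ?_⟩
  · have h1 : ContMDiff 𝓘(ℝ, ℝ) 𝓘(ℝ, ℝ) (⊤ : ℕ∞) (fun a => ehlersCoeff a t) :=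
      ((contDiff_ehlersCoeff_aux t).of_le le_rfl).contMDiff
    exact isSmoothOneForm_smul_aux I W0 _ (h1.comp happ) hW0
  · constructor
    · simp only [ContinuousLinearMap.smul_apply, smul_eq_mul]
      exact ehlersCoeff_mul_self_aux _ t
    · simp only [ContinuousLinearMap.smul_apply, smul_eq_mul]
      rw [ehlersCoeff_mul_self_aux _ t]
      exact Real.exp_pos _
  · funext x
    set a := W0 x (ζ x) with ha
    show ehlersCoeff a s • W0 x + (1 + (ehlersCoeff a s • W0 x) (ζ x)) • (ehlersCoeff a t • W0 x)
        = ehlersCoeff a (t + s) • W0 x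
    rw [ContinuousLinearMap.smul_apply, smul_eq_mul, ← ha, ehlersCoeff_mul_self_aux a s,
      smul_smul, ← add_smul, ehlersCoeff_add_aux a s t]

end
end

section
/- Let U be a smooth manifold, ζ a smooth vector field on U, and W ∈ G^ζ (i.e. a smooth one-form with W(ζ) > −1 everywhere). Define a one-form W⁰ pointwise by W⁰_p = W_p at points where W(ζ)(p) = 0, and W⁰_p = (ln(1 + W(ζ)(p)) / W(ζ)(p)) · W_p at points where W(ζ)(p) ≠ 0. Then W⁰ is a smooth one-form, and the one-parameter subgroup W(t)_p = f(W⁰(ζ)(p), t)·W⁰_p (with f(a,t) = (exp(at)−1)/a for a ≠ 0 and f(0,t) = t) satisfies W(1) = W. In particular, every element of G^ζ lies on a one-parameter subgroup of (G^ζ, ·). -/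
open Bundle
open scoped Manifold

section

variable {E : Type*} [NormedAddCommGroup E] [NormedSpace ℝ E]
  {H : Type*} [TopologicalSpace H] (I : ModelWithCorners ℝ E H)
  {M : Type*} [TopologicalSpace M] [ChartedSpace H M] [IsManifold I ((⊤ : ℕ∞) : WithTop ℕ∞) M]

/-- The coefficient `ln(1 + a)/a` for `a ≠ 0`, and `1` for `a = 0`, used to produce
the infinitesimal generator `W⁰` of an element `W ∈ G^ζ`. -/
noncomputable def ehlersLogCoeff (a : ℝ) : ℝ :=
  if a = 0 then 1 else Real.log (1 + a) / a


lemma ehlersCoeff_mul_self (a t : ℝ) : ehlersCoeff a t * a = Real.exp (a * t) - 1 := by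
  rcases eq_or_ne a 0 with rfl | h
  · simp [ehlersCoeff]
  · rw [ehlersCoeff, if_neg h, div_mul_cancel₀ _ h]

lemma ehlersCoeff_add (a s t : ℝ) :
    ehlersCoeff a s + Real.exp (a * s) * ehlersCoeff a t = ehlersCoeff a (t + s) := by
  rcases eq_or_ne a 0 with rfl | h
  · simp [ehlersCoeff]; ring
  · rw [ehlersCoeff, ehlersCoeff, ehlersCoeff, if_neg h, if_neg h, if_neg h]
    field_simp
    rw [mul_add, Real.exp_add]
    ring

lemma ehlersCoeff_one_pos (a : ℝ) : 0 < ehlersCoeff a 1 := by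
  rcases lt_trichotomy a 0 with h | rfl | h
  · rw [ehlersCoeff, if_neg h.ne, mul_one]
    apply div_pos_of_neg_of_neg _ h
    have : Real.exp a < Real.exp 0 := Real.exp_lt_exp.2 h
    rw [Real.exp_zero] at this; linarith
  · simp [ehlersCoeff]
  · rw [ehlersCoeff, if_neg h.ne', mul_one]
    apply div_pos _ h
    have : Real.exp 0 < Real.exp a := Real.exp_lt_exp.2 h
    rw [Real.exp_zero] at this; linarith

lemma ehlersLog_ne_zero {a : ℝ} (h1 : -1 < a) (h0 : a ≠ 0) : Real.log (1 + a) ≠ 0 := by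
  intro h
  have hpos : (0:ℝ) < 1 + a := by linarith
  have := Real.exp_log hpos
  rw [h, Real.exp_zero] at this
  exact h0 (by linarith)

lemma ehlersLogCoeff_eq_inv {a : ℝ} (h : -1 < a) :
    ehlersLogCoeff a = (ehlersCoeff (Real.log (1 + a)) 1)⁻¹ := by
  have hpos : (0:ℝ) < 1 + a := by linarith
  rcases eq_or_ne a 0 with rfl | h0
  · norm_num [ehlersLogCoeff, ehlersCoeff]
  · have hL := ehlersLog_ne_zero h h0
    rw [ehlersLogCoeff, if_neg h0, ehlersCoeff, if_neg hL, mul_one, Real.exp_log hpos,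
      add_sub_cancel_left, inv_div]

lemma ehlersLogCoeff_mul {a : ℝ} (h : -1 < a) :
    ehlersLogCoeff a * a = Real.log (1 + a) := by
  rcases eq_or_ne a 0 with rfl | h0
  · simp [ehlersLogCoeff]
  · rw [ehlersLogCoeff, if_neg h0, div_mul_cancel₀ _ h0]

lemma ehlersCoeff_log_one_mul {a : ℝ} (h : -1 < a) :
    ehlersCoeff (Real.log (1 + a)) 1 * ehlersLogCoeff a = 1 := by
  rw [ehlersLogCoeff_eq_inv h, mul_inv_cancel₀ (ehlersCoeff_one_pos _).ne']

lemma ehlersCoeff_eq_dslope (t : ℝ) :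
    (fun a => ehlersCoeff a t) = dslope (fun a => Real.exp (a * t)) 0 := by
  funext a
  rcases eq_or_ne a 0 with rfl | h
  · rw [ehlersCoeff, if_pos rfl, dslope_same]
    have : HasDerivAt (fun a : ℝ => Real.exp (a * t)) (Real.exp ((0:ℝ) * t) * (1 * t)) 0 :=
      ((hasDerivAt_id (0:ℝ)).mul_const t).exp
    rw [this.deriv]; norm_num
  · rw [ehlersCoeff, if_neg h, dslope_of_ne _ h, slope]
    simp [div_eq_inv_mul]

lemma contDiffAt_ehlersCoeff {n : WithTop ℕ∞} (t a : ℝ) :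
    ContDiffAt ℝ n (fun a => ehlersCoeff a t) a := by
  rw [ehlersCoeff_eq_dslope]
  rcases eq_or_ne a 0 with rfl | h
  · obtain ⟨p, hp⟩ : AnalyticAt ℝ (fun a : ℝ => Real.exp (a * t)) 0 :=
      analyticAt_rexp.comp (analyticAt_id.mul analyticAt_const)
    exact hp.has_fpower_series_dslope_fslope.analyticAt.contDiffAt
  · have h1 : ContDiffAt ℝ n (fun b : ℝ => (Real.exp (b * t) - 1) / b) a :=
      ((((contDiffAt_id.mul contDiffAt_const).exp).sub contDiffAt_const).div contDiffAt_id h)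
    refine h1.congr_of_eventuallyEq ?_
    filter_upwards [isOpen_ne.mem_nhds h] with b hb
    rw [dslope_of_ne _ hb, slope]
    simp [div_eq_inv_mul]


lemma smooth_oneForm_eval (ζ : ∀ x : M, TangentSpace I x) (hζ : IsSmoothVectorField I ζ)
    (W : ∀ x : M, TangentSpace I x →L[ℝ] ℝ) (hW : IsSmoothOneForm I W) :
    ContMDiff I 𝓘(ℝ, ℝ) (⊤ : ℕ∞) (fun x => W x (ζ x)) := by
  intro x₀
  have h1 := ((contMDiffAt_hom_bundle (f := fun x => (⟨x, W x⟩ : TotalSpace (E →L[ℝ] ℝ)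
      (fun x ↦ TangentSpace I x →SL[RingHom.id ℝ] Bundle.Trivial M ℝ x)))).1
      (hW x₀)).2
  have h2 : ContMDiffAt I (I.prod 𝓘(ℝ, ℝ)) (⊤ : ℕ∞)
      (fun x => (⟨x, W x (ζ x)⟩ : TotalSpace ℝ (Bundle.Trivial M ℝ))) x₀ :=
    ContMDiffAt.clm_apply_of_inCoordinates (F₁ := E) (E₁ := TangentSpace I)
      (F₂ := ℝ) (E₂ := Bundle.Trivial M ℝ) (IB₁ := I) (IB₂ := I)
      (b₁ := (id : M → M)) (b₂ := (id : M → M)) (v := ζ)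
      (ϕ := fun x => W x) h1 (hζ x₀) contMDiffAt_id
  exact (contMDiffAt_totalSpace.1 h2).2

lemma isSmoothOneForm_smul {c : M → ℝ} (hc : ContMDiff I 𝓘(ℝ, ℝ) (⊤ : ℕ∞) c)
    {W : ∀ x : M, TangentSpace I x →L[ℝ] ℝ} (hW : IsSmoothOneForm I W) :
    IsSmoothOneForm I (fun x => c x • W x) := by
  intro x₀
  have h := (contMDiffAt_section
      (F := E →L[ℝ] ℝ)
      (E := fun x ↦ TangentSpace I x →SL[RingHom.id ℝ] Bundle.Trivial M ℝ x)
      (s := fun x => W x) x₀).1 (hW x₀)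
  refine (contMDiffAt_section
      (F := E →L[ℝ] ℝ)
      (E := fun x ↦ TangentSpace I x →SL[RingHom.id ℝ] Bundle.Trivial M ℝ x)
      (s := fun x => c x • W x) x₀).2 ?_
  have hsm := (hc x₀).smul h
  refine hsm.congr_of_eventuallyEq ?_
  have hb := (trivializationAt (E →L[ℝ] ℝ)
      (fun x ↦ TangentSpace I x →SL[RingHom.id ℝ] Bundle.Trivial M ℝ x)
      x₀).open_baseSet.mem_nhds (FiberBundle.mem_baseSet_trivializationAt' x₀)
  filter_upwards [hb] with x hx
  exact ((trivializationAt _ _ x₀).linear ℝ hx).map_smul (c x) (W x)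


/-- **Every element of `G^ζ` lies on a one-parameter subgroup** (Section 3 of the
paper): for a smooth vector field `ζ` and `W ∈ G^ζ`, the one-form
`W⁰ = (ln(1 + W(ζ))/W(ζ))·W` (equal to `W` where `W(ζ) = 0`) is smooth, and the
one-parameter subgroup `W(t) = f(W⁰(ζ), t)·W⁰` of `(G^ζ, ·)` satisfies `W(1) = W`. -/
theorem ehlers_mem_oneParameter_subgroup (ζ : ∀ x : M, TangentSpace I x)
    (hζ : IsSmoothVectorField I ζ)
    (W : ∀ x : M, TangentSpace I x →L[ℝ] ℝ) (hW : IsSmoothOneForm I W)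
    (hWζ : ∀ x : M, -1 < W x (ζ x)) :
    -- `W⁰` is a smooth one-form
    IsSmoothOneForm I (fun x => ehlersLogCoeff (W x (ζ x)) • W x)
    -- the curve `t ↦ W(t)` is a one-parameter subgroup of `(G^ζ, ·)` ...
    ∧ (∀ t : ℝ,
        IsSmoothOneForm I (fun x =>
          ehlersCoeff ((ehlersLogCoeff (W x (ζ x)) • W x) (ζ x)) t
            • (ehlersLogCoeff (W x (ζ x)) • W x))
        ∧ ∀ x : M, -1 <
            (ehlersCoeff ((ehlersLogCoeff (W x (ζ x)) • W x) (ζ x)) t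
              • (ehlersLogCoeff (W x (ζ x)) • W x)) (ζ x))
    ∧ (∀ s t : ℝ,
        oneFormMul I ζ
            (fun x => ehlersCoeff ((ehlersLogCoeff (W x (ζ x)) • W x) (ζ x)) s
              • (ehlersLogCoeff (W x (ζ x)) • W x))
            (fun x => ehlersCoeff ((ehlersLogCoeff (W x (ζ x)) • W x) (ζ x)) t
              • (ehlersLogCoeff (W x (ζ x)) • W x))
          = fun x => ehlersCoeff ((ehlersLogCoeff (W x (ζ x)) • W x) (ζ x)) (t + s)
              • (ehlersLogCoeff (W x (ζ x)) • W x))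
    -- ... passing through `W` at `t = 1`
    ∧ (fun x => ehlersCoeff ((ehlersLogCoeff (W x (ζ x)) • W x) (ζ x)) 1
        • (ehlersLogCoeff (W x (ζ x)) • W x)) = W := by
  have hg : ContMDiff I 𝓘(ℝ, ℝ) (⊤ : ℕ∞) (fun x => W x (ζ x)) := smooth_oneForm_eval I ζ hζ W hW
  have hgpos : ∀ x, (0:ℝ) < 1 + W x (ζ x) := fun x => by linarith [hWζ x]
  have hL : ContMDiff I 𝓘(ℝ, ℝ) (⊤ : ℕ∞) (fun x => Real.log (1 + W x (ζ x))) := by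
    intro x
    have hlog : ContMDiffAt 𝓘(ℝ, ℝ) 𝓘(ℝ, ℝ) (⊤ : ℕ∞) (fun y : ℝ => Real.log (1 + y)) (W x (ζ x)) :=
      ContDiffAt.contMDiffAt
        ((Real.contDiffAt_log.2 (hgpos x).ne').comp _ (contDiffAt_const.add contDiffAt_id))
    exact hlog.comp x (hg x)
  have hc : ContMDiff I 𝓘(ℝ, ℝ) (⊤ : ℕ∞) (fun x => ehlersLogCoeff (W x (ζ x))) := by
    have hc_eq : (fun x => ehlersLogCoeff (W x (ζ x)))
        = fun x => (ehlersCoeff (Real.log (1 + W x (ζ x))) 1)⁻¹ :=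
      funext fun x => ehlersLogCoeff_eq_inv (hWζ x)
    rw [hc_eq]
    intro x
    have hinv : ContMDiffAt 𝓘(ℝ, ℝ) 𝓘(ℝ, ℝ) (⊤ : ℕ∞) (fun y : ℝ => (ehlersCoeff y 1)⁻¹)
        (Real.log (1 + W x (ζ x))) :=
      ContDiffAt.contMDiffAt ((contDiffAt_ehlersCoeff 1 _).inv (ehlersCoeff_one_pos _).ne')
    exact hinv.comp (f := fun x => Real.log (1 + W x (ζ x))) x (hL x)
  have key : ∀ x, (ehlersLogCoeff (W x (ζ x)) • W x) (ζ x) = Real.log (1 + W x (ζ x)) := by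
    intro x
    rw [ContinuousLinearMap.smul_apply, smul_eq_mul, ehlersLogCoeff_mul (hWζ x)]
  have hW0 : IsSmoothOneForm I (fun x => ehlersLogCoeff (W x (ζ x)) • W x) :=
    isSmoothOneForm_smul I hc hW
  have hd : ∀ t : ℝ, ContMDiff I 𝓘(ℝ, ℝ) (⊤ : ℕ∞)
      (fun x => ehlersCoeff ((ehlersLogCoeff (W x (ζ x)) • W x) (ζ x)) t) := by
    intro t
    have : (fun x => ehlersCoeff ((ehlersLogCoeff (W x (ζ x)) • W x) (ζ x)) t)
        = fun x => ehlersCoeff (Real.log (1 + W x (ζ x))) t :=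
      funext fun x => by rw [key x]
    rw [this]
    intro x
    have hco : ContMDiffAt 𝓘(ℝ, ℝ) 𝓘(ℝ, ℝ) (⊤ : ℕ∞) (fun y : ℝ => ehlersCoeff y t)
        (Real.log (1 + W x (ζ x))) :=
      ContDiffAt.contMDiffAt (contDiffAt_ehlersCoeff t _)
    exact hco.comp x (hL x)
  refine ⟨hW0, ?_, ?_, ?_⟩
  · intro t
    refine ⟨isSmoothOneForm_smul I (hd t) hW0, ?_⟩
    intro x
    rw [ContinuousLinearMap.smul_apply, smul_eq_mul, key x, ehlersCoeff_mul_self]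
    linarith [Real.exp_pos (Real.log (1 + W x (ζ x)) * t)]
  · intro s t
    funext x
    rw [oneFormMul]
    generalize (ehlersLogCoeff (W x (ζ x)) • W x) = V
    rw [ContinuousLinearMap.smul_apply, smul_eq_mul, ehlersCoeff_mul_self]
    have h1 : (1:ℝ) + (Real.exp (V (ζ x) * s) - 1) = Real.exp (V (ζ x) * s) := by ring
    rw [h1, smul_smul, ← add_smul, ehlersCoeff_add]
  · funext x
    rw [key x, smul_smul, ehlersCoeff_log_one_mul (hWζ x), one_smul]

end
end
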